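/- If a component C of a residual graph is a path P3 with both leaves blue and center green, then the total weight of C is 4 and exactly one more legal move must be played in C to totally dominate all vertices of C, and that move decreases the weight of C by exactly 4. -/

import Mathlib

open SimpleGraph Finset

inductive GameColor | white | green | blue | red
deriving DecidableEq

def GameColor.weight : GameColor → ℕ
  | white => 3
  | green => 2
  | blue => 1
  | red => 0

variable {V : Type} [Fintype V] [DecidableEq V]

/-- The set of vertices totally dominated by the played set `D`. -/
def totDom (G : SimpleGraph V) [DecidableRel G.Adj] (D : Finset V) : Finset V :=
  Finset.univ.filter fun u => ∃ v ∈ D, G.Adj u v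

/-- A vertex `v` is a legal move if playing it totally dominates a new vertex. -/
def isLegal (G : SimpleGraph V) [DecidableRel G.Adj] (D : Finset V) (v : V) : Prop :=
  ∃ u, G.Adj v u ∧ u ∉ totDom G D

instance (G : SimpleGraph V) [DecidableRel G.Adj] (D : Finset V) :
    DecidablePred (isLegal G D) := fun v =>
  decidable_of_iff (∃ u, G.Adj v u ∧ u ∉ totDom G D) Iff.rfl

/-- The color of a vertex in the partially total dominated graph with played set `D`. -/
def colorOf (G : SimpleGraph V) [DecidableRel G.Adj] (D : Finset V) (v : V) : GameColor :=
  if v ∈ totDom G D then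
    (if isLegal G D v then .blue else .red)
  else (if v ∈ D then .green else .white)

/-- The total weight of the colored graph. -/
def totalWeight (G : SimpleGraph V) [DecidableRel G.Adj] (D : Finset V) : ℕ :=
  ∑ v, (colorOf G D v).weight

/-- The residualGraph graph: delete red vertices and blue–blue edges. -/
def residualGraph (G : SimpleGraph V) [DecidableRel G.Adj] (D : Finset V) : SimpleGraph V where
  Adj u w := G.Adj u w ∧ colorOf G D u ≠ .red ∧ colorOf G D w ≠ .red ∧
      ¬(colorOf G D u = .blue ∧ colorOf G D w = .blue)
  symm := ⟨fun u w ⟨h, a, b, c⟩ => ⟨h.symm, b, a, fun ⟨x, y⟩ => c ⟨y, x⟩⟩⟩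
  loopless := ⟨fun u ⟨h, _⟩ => G.loopless.irrefl u h⟩

instance (G : SimpleGraph V) [DecidableRel G.Adj] (D : Finset V) :
    DecidableRel (residualGraph G D).Adj := fun u w =>
  decidable_of_iff (G.Adj u w ∧ colorOf G D u ≠ .red ∧ colorOf G D w ≠ .red ∧
      ¬(colorOf G D u = .blue ∧ colorOf G D w = .blue)) Iff.rfl

def legalMoves (G : SimpleGraph V) [DecidableRel G.Adj] (D : Finset V) : Finset V :=
  Finset.univ.filter (isLegal G D)

/-- The value of the total domination game from position `D` with `fuel` moves allowed,
where `isDom = true` when it is Dominator's turn (Dominator minimizes, Staller maximizes).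
Since each legal move totally dominates a new vertex, fuel `Fintype.card V` always suffices. -/
def gameVal (G : SimpleGraph V) [DecidableRel G.Adj] : Bool → ℕ → Finset V → ℕ
  | _, 0, _ => 0
  | isDom, n + 1, D =>
    if h : (legalMoves G D).Nonempty then
      if isDom then 1 + (legalMoves G D).inf' h fun v => gameVal G false n (insert v D)
      else 1 + (legalMoves G D).sup' h fun v => gameVal G true n (insert v D)
    else 0

/-- The game total domination number `γ_tg(G)`: Dominator starts, both play optimally. -/
def gtd (G : SimpleGraph V) [DecidableRel G.Adj] : ℕ :=
  gameVal G true (Fintype.card V) ∅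

lemma blue_spec (G : SimpleGraph V) [DecidableRel G.Adj] (D : Finset V) {x : V}
    (h : colorOf G D x = .blue) : x ∈ totDom G D ∧ isLegal G D x := by
  unfold colorOf at h; split_ifs at h <;> simp_all

lemma red_spec (G : SimpleGraph V) [DecidableRel G.Adj] (D : Finset V) {x : V}
    (h : colorOf G D x = .red) : x ∈ totDom G D := by
  unfold colorOf at h; split_ifs at h <;> simp_all

lemma green_spec (G : SimpleGraph V) [DecidableRel G.Adj] (D : Finset V) {x : V}
    (h : colorOf G D x = .green) : x ∉ totDom G D ∧ x ∈ D := by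
  unfold colorOf at h; split_ifs at h <;> simp_all

lemma mem_totDom_iff (G : SimpleGraph V) [DecidableRel G.Adj] (D : Finset V) (u : V) :
    u ∈ totDom G D ↔ ∃ v ∈ D, G.Adj u v := by simp [totDom]

lemma totDom_mono (G : SimpleGraph V) [DecidableRel G.Adj] (D : Finset V) (v : V) :
    totDom G D ⊆ totDom G (insert v D) := by
  intro u hu
  rw [mem_totDom_iff] at hu ⊢
  obtain ⟨w, hw, h⟩ := hu
  exact ⟨w, Finset.mem_insert_of_mem hw, h⟩

lemma adj_cases (G : SimpleGraph V) [DecidableRel G.Adj] (D : Finset V) {x u : V}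
    (hx : colorOf G D x ≠ .red) (hadj : G.Adj x u) :
    u ∈ (residualGraph G D).neighborFinset x ∨ u ∈ totDom G D := by
  by_cases h : colorOf G D u = .red
  · exact Or.inr (red_spec G D h)
  · by_cases hb : colorOf G D x = .blue ∧ colorOf G D u = .blue
    · exact Or.inr (blue_spec G D hb.2).1
    · left; rw [SimpleGraph.mem_neighborFinset]; exact ⟨hadj, hx, h, hb⟩

lemma red_of (G : SimpleGraph V) [DecidableRel G.Adj] (D : Finset V) {x : V}
    (h1 : x ∈ totDom G D) (h2 : ¬ isLegal G D x) : colorOf G D x = .red := by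
  unfold colorOf; rw [if_pos h1, if_neg h2]

/-- If a component `C` of the residual graph is a `P3` with blue leaves and
green center, then `C` has total weight 4 and exactly one more legal move in `C` totally
dominates `C`, and that move decreases the weight of `C` by exactly 4. -/
theorem stmt9 (G : SimpleGraph V) [DecidableRel G.Adj] (D : Finset V)
    (b1 g b2 : V)
    (hcard : ({b1, g, b2} : Finset V).card = 3)
    (hc1 : colorOf G D b1 = .blue) (hc2 : colorOf G D g = .green)
    (hc3 : colorOf G D b2 = .blue)
    (hn1 : (residualGraph G D).neighborFinset b1 = {g})
    (hn2 : (residualGraph G D).neighborFinset g = {b1, b2})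
    (hn3 : (residualGraph G D).neighborFinset b2 = {g}) :
    (∑ x ∈ ({b1, g, b2} : Finset V), (colorOf G D x).weight) = 4 ∧
    (∃ v ∈ ({b1, g, b2} : Finset V), isLegal G D v) ∧
    (∀ v ∈ ({b1, g, b2} : Finset V), isLegal G D v →
      ({b1, g, b2} : Finset V) ⊆ totDom G (insert v D) ∧
      (∑ x ∈ ({b1, g, b2} : Finset V), (colorOf G (insert v D) x).weight) + 4 =
        (∑ x ∈ ({b1, g, b2} : Finset V), (colorOf G D x).weight)) := by
  -- distinctness
  have hne12 : b1 ≠ g := by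
    rintro rfl
    have : ({b1, b1, b2} : Finset V) = {b1, b2} := by simp
    rw [this] at hcard
    have := Finset.card_insert_le b1 ({b2} : Finset V)
    simp at this; omega
  have hne13 : b1 ≠ b2 := by
    rintro rfl
    have : ({b1, g, b1} : Finset V) = {b1, g} := by
      ext x; simp; tauto
    rw [this] at hcard
    have := Finset.card_insert_le b1 ({g} : Finset V)
    simp at this; omega
  have hne23 : g ≠ b2 := by
    rintro rfl
    have : ({b1, g, g} : Finset V) = {b1, g} := by simp
    rw [this] at hcard
    have := Finset.card_insert_le b1 ({g} : Finset V)
    simp at this; omega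
  have hb1 := blue_spec G D hc1
  have hg := green_spec G D hc2
  have hb2 := blue_spec G D hc3
  -- adjacency in G
  have hAgb1 : G.Adj g b1 := by
    have : b1 ∈ (residualGraph G D).neighborFinset g := by rw [hn2]; simp
    exact ((SimpleGraph.mem_neighborFinset _ _ _).1 this).1
  have hAgb2 : G.Adj g b2 := by
    have : b2 ∈ (residualGraph G D).neighborFinset g := by rw [hn2]; simp
    exact ((SimpleGraph.mem_neighborFinset _ _ _).1 this).1
  -- neighbor structure in G
  have hNb1 : ∀ u, G.Adj b1 u → u = g ∨ u ∈ totDom G D := by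
    intro u hu
    rcases adj_cases G D (by rw [hc1]; simp) hu with h | h
    · left; rw [hn1] at h; simpa using h
    · exact Or.inr h
  have hNb2 : ∀ u, G.Adj b2 u → u = g ∨ u ∈ totDom G D := by
    intro u hu
    rcases adj_cases G D (by rw [hc3]; simp) hu with h | h
    · left; rw [hn3] at h; simpa using h
    · exact Or.inr h
  have hNg : ∀ u, G.Adj g u → u ∈ totDom G D := by
    intro u hu
    rcases adj_cases G D (by rw [hc2]; simp) hu with h | h
    · rw [hn2] at h
      rcases Finset.mem_insert.1 h with rfl | h
      · exact hb1.1
      · rw [Finset.mem_singleton] at h; subst h; exact hb2.1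
    · exact h
  -- g is not legal
  have hgNotLegal : ¬ isLegal G D g := by
    rintro ⟨u, hu, hnu⟩
    exact hnu (hNg u hu)
  -- weight sum
  have hsum : (∑ x ∈ ({b1, g, b2} : Finset V), (colorOf G D x).weight) = 4 := by
    rw [Finset.sum_insert (by simp [hne12, hne13]),
        Finset.sum_insert (by simp [hne23]), Finset.sum_singleton,
        hc1, hc2, hc3]
    rfl
  refine ⟨hsum, ⟨b1, by simp, hb1.2⟩, ?_⟩
  intro v hv hleg
  -- v is b1 or b2
  have hv' : v = b1 ∨ v = b2 := by
    simp only [Finset.mem_insert, Finset.mem_singleton] at hv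
    rcases hv with rfl | rfl | rfl
    · exact Or.inl rfl
    · exact absurd hleg hgNotLegal
    · exact Or.inr rfl
  -- g becomes dominated
  have hgIn : g ∈ totDom G (insert v D) := by
    rw [mem_totDom_iff]
    rcases hv' with rfl | rfl
    · exact ⟨v, Finset.mem_insert_self _ _, hAgb1⟩
    · exact ⟨v, Finset.mem_insert_self _ _, hAgb2⟩
  have hmono := totDom_mono G D v
  have hb1In : b1 ∈ totDom G (insert v D) := hmono hb1.1
  have hb2In : b2 ∈ totDom G (insert v D) := hmono hb2.1
  have hsub : ({b1, g, b2} : Finset V) ⊆ totDom G (insert v D) := by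
    intro x hx
    simp only [Finset.mem_insert, Finset.mem_singleton] at hx
    rcases hx with rfl | rfl | rfl <;> assumption
  refine ⟨hsub, ?_⟩
  -- all three are red afterwards
  have hred1 : colorOf G (insert v D) b1 = .red := by
    refine red_of G _ hb1In ?_
    rintro ⟨u, hu, hnu⟩
    rcases hNb1 u hu with rfl | h
    · exact hnu hgIn
    · exact hnu (hmono h)
  have hred2 : colorOf G (insert v D) g = .red := by
    refine red_of G _ hgIn ?_
    rintro ⟨u, hu, hnu⟩
    exact hnu (hmono (hNg u hu))
  have hred3 : colorOf G (insert v D) b2 = .red := by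
    refine red_of G _ hb2In ?_
    rintro ⟨u, hu, hnu⟩
    rcases hNb2 u hu with rfl | h
    · exact hnu hgIn
    · exact hnu (hmono h)
  rw [hsum,
      Finset.sum_insert (by simp [hne12, hne13]),
      Finset.sum_insert (by simp [hne23]), Finset.sum_singleton,
      hred1, hred2, hred3]
  rfl
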